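/- Let m and n be natural numbers and let f be an elementary embedding from Fin m into Fin n, where Fin m and Fin n carry their linear orders as structures for the first-order language with a single binary relation symbol (Mathlib's Language.order). Then f is the canonical inclusion: for every i : Fin m, the value f i, viewed as a natural number, equals i (viewed as a natural number). -/

import Mathlib

open FirstOrder

attribute [local instance] FirstOrder.Language.orderStructure

namespace ElemEmbAux

open FirstOrder.Language

attribute [local instance] FirstOrder.Language.orderStructure

instance (M : Type*) [LE M] : Language.order.OrderedStructure M :=
  ⟨fun _ => Iff.rfl⟩

/-- The formula saying there is an element strictly between `v 0` and `v 1`. -/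
noncomputable def betw : Language.order.Formula (Fin 2) :=
  BoundedFormula.ex
    (((Term.var (Sum.inl 0)).lt (Term.var (Sum.inr 0))) ⊓
      ((Term.var (Sum.inr 0)).lt (Term.var (Sum.inl 1))))

/-- The formula saying there is an element strictly below `v 0`. -/
noncomputable def below : Language.order.Formula (Fin 1) :=
  BoundedFormula.ex ((Term.var (Sum.inr 0)).lt (Term.var (Sum.inl 0)))

lemma realize_betw {M : Type*} [LinearOrder M] (x : Fin 2 → M) :
    betw.Realize x ↔ ∃ z : M, x 0 < z ∧ z < x 1 := by
  simp [betw, Formula.Realize, Term.realize_lt, Fin.snoc]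

lemma realize_below {M : Type*} [LinearOrder M] (x : Fin 1 → M) :
    below.Realize x ↔ ∃ z : M, z < x 0 := by
  simp [below, Formula.Realize, Term.realize_lt, Fin.snoc]

end ElemEmbAux

/-- An elementary embedding (for the language with a single binary relation symbol,
interpreted as the linear order) from `Fin m` into `Fin n` is the canonical
inclusion: `f i`, viewed as a natural number, equals `i`. -/
theorem elementaryEmbedding_fin_eq_id (m n : ℕ)
    (f : Fin m ↪ₑ[Language.order] Fin n) :
    ∀ i : Fin m, ((f i : Fin n) : ℕ) = (i : ℕ) := by
  have smono : StrictMono f := Language.HomClass.strictMono f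
  suffices key : ∀ k : ℕ, ∀ i : Fin m, (i : ℕ) = k → ((f i : Fin n) : ℕ) = k by
    exact fun i => key _ i rfl
  intro k
  induction k with
  | zero =>
    intro i hk
    -- f i has nothing below it, since i = 0 has nothing below it
    by_contra h
    have hpos : (0 : ℕ) < ((f i : Fin n) : ℕ) := Nat.pos_of_ne_zero h
    have hb : ElemEmbAux.below.Realize (fun _ : Fin 1 => (f i : Fin n)) := by
      rw [ElemEmbAux.realize_below]
      exact ⟨⟨0, lt_of_le_of_lt (Nat.zero_le _) (f i).isLt⟩, by
        simpa [Fin.lt_def] using hpos⟩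
    have hb' : ElemEmbAux.below.Realize (fun _ : Fin 1 => i) := by
      have := f.map_formula ElemEmbAux.below (fun _ : Fin 1 => i)
      rw [← this]
      convert hb using 1
      rfl
    rw [ElemEmbAux.realize_below] at hb'
    obtain ⟨z, hz⟩ := hb'
    rw [Fin.lt_def, hk] at hz
    exact Nat.not_lt_zero _ hz
  | succ k ih =>
    intro i hk
    have hkm : k < m := lt_trans (by omega) (hk ▸ i.isLt)
    set j : Fin m := ⟨k, hkm⟩ with hj
    have hji : j < i := by rw [Fin.lt_def, hk]; exact Nat.lt_succ_self k
    have hfj : ((f j : Fin n) : ℕ) = k := ih j rfl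
    have hlt : f j < f i := smono hji
    have hge : k + 1 ≤ ((f i : Fin n) : ℕ) := by
      rw [Fin.lt_def, hfj] at hlt; omega
    by_contra h
    have hgt : k + 1 < ((f i : Fin n) : ℕ) := by omega
    -- then there is something strictly between f j and f i
    have hb : ElemEmbAux.betw.Realize (fun t : Fin 2 => if t = 0 then (f j : Fin n) else f i) := by
      rw [ElemEmbAux.realize_betw]
      refine ⟨⟨k + 1, lt_trans hgt (f i).isLt⟩, ?_, ?_⟩
      · simp [Fin.lt_def, hfj]
      · simpa [Fin.lt_def] using hgt
    have hb' : ElemEmbAux.betw.Realize (fun t : Fin 2 => if t = 0 then j else i) := by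
      have := f.map_formula ElemEmbAux.betw (fun t : Fin 2 => if t = 0 then j else i)
      rw [← this]
      convert hb using 2 with t
      by_cases ht : t = 0 <;> simp [ht]
    rw [ElemEmbAux.realize_betw] at hb'
    obtain ⟨z, hz1, hz2⟩ := hb'
    simp only [Fin.lt_def, hj, if_pos, if_neg one_ne_zero] at hz1 hz2
    simp only [reduceIte, hk] at hz1 hz2
    omega
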